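/- Every balanced mutually uncorrelated code C ⊆ Σ_q^n (n even, q even) satisfies |C| ≤ binomial(n, n/2)·(q/2)^n / n. -/

import Mathlib

/-- every balanced MU code `C ⊆ Σ_q^n` (with `n` and `q` even) satisfies
`|C| ≤ C(n, n/2) (q/2)^n / n`. -/
theorem balanced_MU_upper_bound (n q : ℕ) (hn : 0 < n) (hq : 0 < q)
    (hne : Even n) (hqe : Even q) (C : Finset (Fin n → Fin q))
    (hbal : ∀ a ∈ C,
      (Finset.univ.filter (fun i : Fin n => (a i).val < q / 2)).card = n / 2)
    (hmu : ∀ a ∈ C, ∀ b ∈ C, ∀ i : ℕ, ∀ h1 : 1 ≤ i, ∀ h2 : i ≤ n - 1,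
      (fun j : Fin i => a (Fin.castLE (by omega) j)) ≠
      (fun j : Fin i => b ⟨n - i + j.val, by have := j.isLt; omega⟩)) :
    C.card ≤ n.choose (n / 2) * (q / 2) ^ n / n := by
  haveI : NeZero n := ⟨hn.ne'⟩
  have hq2 : 0 < q / 2 := by obtain ⟨m, hm⟩ := hqe; omega
  have hq22 : q / 2 + q / 2 = q := by obtain ⟨m, hm⟩ := hqe; omega
  set B : Finset (Fin n → Fin q) :=
    Finset.univ.filter (fun a => (Finset.univ.filter
      (fun i : Fin n => (a i).val < q / 2)).card = n / 2) with hB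
  -- Step 1: the n cyclic shifts of all codewords are distinct balanced words
  have step1 : C.card * n ≤ B.card := by
    have key := Finset.card_le_card_of_injOn
      (f := fun p : (Fin n → Fin q) × Fin n => fun t : Fin n => p.1 (t + p.2))
      (s := C ×ˢ Finset.univ) (t := B) ?_ ?_
    · simpa [Finset.card_product] using key
    · rintro ⟨a, i⟩ hp
      simp only [Finset.mem_coe, Finset.mem_product, Finset.mem_univ, and_true] at hp
      simp only [Finset.mem_coe, hB, Finset.mem_filter, Finset.mem_univ, true_and]
      rw [← hbal a hp]
      exact Finset.card_bij' (fun t _ => t + i) (fun t _ => t - i)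
        (fun t ht => by simpa using ht)
        (fun t ht => by simpa using ht)
        (fun t _ => by simp) (fun t _ => by simp)
    · rintro ⟨a, i⟩ hp ⟨b, j⟩ hq' heq
      simp only [Finset.mem_coe, Finset.mem_product, Finset.mem_univ, and_true] at hp hq'
      have key : ∀ s : Fin n, a s = b (s + (j - i)) := by
        intro s
        have h1 : a (s - i + i) = b (s - i + j) := congrFun heq (s - i)
        have e1 : s - i + i = s := by abel
        have e2 : s - i + j = s + (j - i) := by abel
        rw [e1, e2] at h1
        exact h1
      by_cases hk : j - i = 0
      · have hij : j = i := by
          have := sub_eq_zero.mp hk; exact this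
        have hab : a = b := funext fun s => by simpa [hk] using key s
        simp [Prod.ext_iff, hab, hij]
      · have hkv : (j - i).val ≠ 0 := by
          intro h; exact hk (Fin.ext (by simp [h]))
        have hklt : (j - i).val < n := (j - i).isLt
        have h1' : 1 ≤ n - (j - i).val := by omega
        have h2' : n - (j - i).val ≤ n - 1 := by omega
        exfalso
        apply hmu a hp b hq' (n - (j - i).val) h1' h2'
        funext m
        have hm := key (Fin.castLE (by omega) m)
        have hmlt := m.isLt
        rw [hm]
        congr 1
        apply Fin.ext
        simp only [Fin.val_add, Fin.castLE]
        rw [Nat.mod_eq_of_lt (by omega)]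
        omega
  -- Step 2: balanced words are at most choose(n, n/2) * (q/2)^n
  have step2 : B.card ≤ n.choose (n / 2) * (q / 2) ^ n := by
    have key := Finset.card_le_card_of_injOn
      (f := fun a : Fin n → Fin q =>
        ((Finset.univ.filter (fun i : Fin n => (a i).val < q / 2) : Finset (Fin n)),
         fun i : Fin n => (⟨(a i).val % (q / 2), Nat.mod_lt _ hq2⟩ : Fin (q / 2))))
      (s := B)
      (t := (Finset.powersetCard (n / 2) (Finset.univ : Finset (Fin n))) ×ˢ
        (Finset.univ : Finset (Fin n → Fin (q / 2)))) ?_ ?_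
    · calc B.card ≤ _ := key
        _ = n.choose (n / 2) * (q / 2) ^ n := by
          simp [Finset.card_product, Finset.card_powersetCard]
    · intro a ha
      simp only [Finset.mem_coe, hB, Finset.mem_filter, Finset.mem_univ, true_and] at ha
      simp only [Finset.mem_coe, Finset.mem_product, Finset.mem_univ, and_true]
      rw [Finset.mem_powersetCard_univ]
      exact ha
    · intro a _ b _ heq
      simp only [Prod.mk.injEq] at heq
      obtain ⟨hS, hv⟩ := heq
      funext i
      have hvi : (a i).val % (q / 2) = (b i).val % (q / 2) := by
        have := congrFun hv i
        simpa using this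
      have hSi : ((a i).val < q / 2) ↔ ((b i).val < q / 2) := by
        have := Finset.ext_iff.mp hS i
        simpa using this
      have hal := (a i).isLt
      have hbl := (b i).isLt
      apply Fin.ext
      by_cases h : (a i).val < q / 2
      · have hb' : (b i).val < q / 2 := hSi.mp h
        rw [Nat.mod_eq_of_lt h, Nat.mod_eq_of_lt hb'] at hvi
        exact hvi
      · have hb' : ¬ (b i).val < q / 2 := fun hh => h (hSi.mpr hh)
        have ha2 : (a i).val % (q / 2) = (a i).val - q / 2 := by
          rw [Nat.mod_eq_sub_mod (by omega), Nat.mod_eq_of_lt (by omega)]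
        have hb2 : (b i).val % (q / 2) = (b i).val - q / 2 := by
          rw [Nat.mod_eq_sub_mod (by omega), Nat.mod_eq_of_lt (by omega)]
        omega
  rw [Nat.le_div_iff_mul_le hn]
  exact le_trans step1 step2
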